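/- Let m ≥ 1, let J_m = I^{m−1}J₁ be the (m−1)-fold zero-mean primitive of the sawtooth J₁, and let φ be a zero-mean L^∞ function on S¹ orthogonal to all trigonometric polynomials of degree ≤ k−1. Then for every trigonometric polynomial p of degree ≤ k−1, ‖I^m φ‖_∞ ≤ ‖φ‖_∞ · ‖J_m − p‖_{L¹}. -/

import Mathlib

open Real MeasureTheory intervalIntegral

/-- The 2π-periodic sawtooth: `J₁(x) = x` for `x ∈ (−π, π)` and `J₁(π) = 0`. -/
noncomputable def J1fun (x : ℝ) : ℝ :=
  if x - 2 * π * round (x / (2 * π)) = -π then 0 else x - 2 * π * round (x / (2 * π))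

/-- A real trigonometric polynomial of degree at most `n`. -/
def IsTrigPoly (n : ℕ) (p : ℝ → ℝ) : Prop :=
  ∃ a b : ℕ → ℝ, ∀ x : ℝ,
    p x = ∑ j ∈ Finset.range (n + 1), (a j * Real.cos (j * x) + b j * Real.sin (j * x))

private lemma bddInt {f : ℝ → ℝ} (hf : Measurable f) {M : ℝ} (h : ∀ x, |f x| ≤ M)
    (a b : ℝ) : IntervalIntegrable f volume a b := by
  rw [intervalIntegrable_iff]
  refine (integrableOn_const measure_Ioc_lt_top.ne : IntegrableOn (fun _ => M) (Set.uIoc a b) volume).mono'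
    hf.aestronglyMeasurable.restrict (Filter.Eventually.of_forall fun x => by simpa using h x)

private lemma finiteRestrict (a b : ℝ) : IsFiniteMeasure (volume.restrict (Set.Ioc a b)) :=
  ⟨by rw [Measure.restrict_apply_univ]; exact measure_Ioc_lt_top⟩

private lemma fubini_le {f : ℝ → ℝ → ℝ} (hf : Measurable (Function.uncurry f)) {M : ℝ}
    (h : ∀ y t, |f y t| ≤ M) {a b c d : ℝ} (hab : a ≤ b) (hcd : c ≤ d) :
    (∫ y in a..b, ∫ t in c..d, f y t) = ∫ t in c..d, ∫ y in a..b, f y t := by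
  haveI := finiteRestrict a b
  haveI := finiteRestrict c d
  simp only [intervalIntegral.integral_of_le hab, intervalIntegral.integral_of_le hcd]
  refine MeasureTheory.integral_integral_swap ?_
  refine (MeasureTheory.integrable_const M).mono' hf.aestronglyMeasurable
    (Filter.Eventually.of_forall fun z => by rw [Real.norm_eq_abs]; exact h z.1 z.2)

private lemma fubini_swap {f : ℝ → ℝ → ℝ} (hf : Measurable (Function.uncurry f)) {M : ℝ}
    (h : ∀ y t, |f y t| ≤ M) (a b : ℝ) {c d : ℝ} (hcd : c ≤ d) :
    (∫ y in a..b, ∫ t in c..d, f y t) = ∫ t in c..d, ∫ y in a..b, f y t := by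
  rcases le_total a b with hab | hba
  · exact fubini_le hf h hab hcd
  · simp only [intervalIntegral.integral_symm b a]
    rw [intervalIntegral.integral_neg, neg_inj]
    exact fubini_le hf h hba hcd

private lemma shift_integral {g : ℝ → ℝ} (hgper : Function.Periodic g (2*π)) (c : ℝ) :
    (∫ x in (0:ℝ)..(2*π), g (x + c)) = ∫ x in (0:ℝ)..(2*π), g x := by
  rw [intervalIntegral.integral_comp_add_right, zero_add,
    show (2*π + c) = c + 2*π by ring]
  have := hgper.intervalIntegral_add_eq c 0
  rwa [zero_add] at this

private lemma reflect_integral {g : ℝ → ℝ} (hgper : Function.Periodic g (2*π)) (c : ℝ) :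
    (∫ t in (0:ℝ)..(2*π), g (c - t)) = ∫ x in (0:ℝ)..(2*π), g x := by
  rw [intervalIntegral.integral_comp_sub_left, sub_zero]
  have := hgper.intervalIntegral_add_eq (c - 2*π) 0
  rwa [sub_add_cancel, zero_add] at this

private lemma conv_mean_zero {g φ : ℝ → ℝ} (hg : Measurable g) {C M : ℝ}
    (hgb : ∀ x, |g x| ≤ C) (hgper : Function.Periodic g (2*π))
    (hgmean : (∫ x in (0:ℝ)..(2*π), g x) = 0)
    (hφm : Measurable φ) (hφb : ∀ x, |φ x| ≤ M) :
    (∫ x in (0:ℝ)..(2*π), ∫ t in (0:ℝ)..(2*π), g (x + π - t) * φ t) = 0 := by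
  have h2π : (0:ℝ) ≤ 2*π := by positivity
  have hf : Measurable (Function.uncurry fun x t => g (x + π - t) * φ t) :=
    (hg.comp ((measurable_fst.add_const π).sub measurable_snd)).mul (hφm.comp measurable_snd)
  have hC0 : 0 ≤ C := (abs_nonneg _).trans (hgb 0)
  have hb : ∀ x t, |g (x + π - t) * φ t| ≤ C * M := fun x t => by
    rw [abs_mul]
    exact mul_le_mul (hgb _) (hφb _) (abs_nonneg _) hC0
  rw [fubini_le hf hb h2π h2π]
  have hz : ∀ t, (∫ x in (0:ℝ)..(2*π), g (x + π - t) * φ t) = 0 := by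
    intro t
    rw [intervalIntegral.integral_mul_const]
    have h1 : (fun x => g (x + π - t)) = fun x => g (x + (π - t)) := by
      funext x; congr 1; ring
    rw [h1, shift_integral hgper, hgmean, zero_mul]
  simp only [hz, intervalIntegral.integral_zero]

private lemma eq_of_increment_mean {F G : ℝ → ℝ}
    (hinc : ∀ x, F x - F 0 = G x - G 0)
    (hFmean : (∫ x in (0:ℝ)..(2*π), F x) = 0) (hGmean : (∫ x in (0:ℝ)..(2*π), G x) = 0)
    (hFint : IntervalIntegrable F volume 0 (2*π)) : ∀ x, F x = G x := by
  have hc : ∀ x, G x = F x - (F 0 - G 0) := fun x => by have := hinc x; linarith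
  have h1 : (∫ x in (0:ℝ)..(2*π), G x) = ∫ x in (0:ℝ)..(2*π), (F x - (F 0 - G 0)) :=
    intervalIntegral.integral_congr fun x _ => hc x
  rw [hGmean, intervalIntegral.integral_sub hFint intervalIntegrable_const, hFmean,
    intervalIntegral.integral_const, zero_sub, sub_zero] at h1
  have hπ := Real.pi_pos
  have h2 : F 0 - G 0 = 0 := by
    have h3 := h1.symm
    rw [neg_eq_zero, smul_eq_mul, mul_eq_zero] at h3
    rcases h3 with h | h
    · nlinarith
    · exact h
  intro x
  rw [hc x, h2, sub_zero]

private lemma round_zero_of {x : ℝ} (h1 : -π ≤ x) (h2 : x < π) : round (x / (2*π)) = 0 := by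
  have h2π : (0:ℝ) < 2*π := by positivity
  rw [round_eq, Int.floor_eq_zero_iff]
  have ha : -(1/2 : ℝ) ≤ x / (2*π) := by
    rw [neg_le, ← neg_div, div_le_iff₀ h2π]; nlinarith
  have hb : x / (2*π) < 1/2 := by rw [div_lt_iff₀ h2π]; nlinarith
  exact Set.mem_Ico.mpr ⟨by linarith, by linarith⟩

private lemma J1_eq {x : ℝ} (h1 : -π < x) (h2 : x < π) : J1fun x = x := by
  have hr : round (x / (2*π)) = 0 := round_zero_of h1.le h2
  simp only [J1fun, hr, Int.cast_zero, mul_zero, sub_zero]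
  rw [if_neg (by linarith)]

private lemma J1_periodic : Function.Periodic J1fun (2*π) := by
  intro x
  have h2π : (2*π : ℝ) ≠ 0 := by positivity
  have h1 : (x + 2*π)/(2*π) = x/(2*π) + 1 := by field_simp
  have h2 : x + 2*π - 2*π*((round (x/(2*π)) : ℝ) + 1) = x - 2*π*(round (x/(2*π)) : ℝ) := by ring
  simp only [J1fun, h1, round_add_one]
  push_cast
  rw [h2]

private lemma J1_eq' {x : ℝ} (h1 : π < x) (h2 : x < 3*π) : J1fun x = x - 2*π := by
  have h3 : J1fun x = J1fun (x - 2*π) := by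
    have h4 := J1_periodic (x - 2*π); rw [sub_add_cancel] at h4; exact h4
  rw [h3, J1_eq (by linarith) (by linarith)]

private lemma J1_bound (x : ℝ) : |J1fun x| ≤ π := by
  have hπ := Real.pi_pos
  have h2π : (0:ℝ) < 2*π := by positivity
  unfold J1fun
  split
  · simpa using hπ.le
  · have h := abs_sub_round (x / (2*π))
    have he : x - 2*π*(round (x/(2*π)) : ℝ) = (2*π) * (x/(2*π) - round (x/(2*π))) := by
      field_simp
    rw [he, abs_mul, abs_of_pos h2π]
    nlinarith [abs_nonneg (x/(2*π) - (round (x/(2*π)) : ℝ))]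

private lemma J1_measurable : Measurable J1fun := by
  have hg : Measurable (fun x : ℝ => x - 2*π*(round (x/(2*π)) : ℝ)) := by
    apply Measurable.sub measurable_id
    apply Measurable.const_mul
    have h : (fun x : ℝ => ((round (x/(2*π)) : ℤ) : ℝ)) =
        fun x => ((⌊x/(2*π) + 1/2⌋ : ℤ) : ℝ) := by
      funext x; rw [round_eq]
    rw [h]
    exact (measurable_from_top (α := ℤ)).comp
      (Int.measurable_floor.comp ((measurable_id.div_const _).add_const _))
  unfold J1fun
  exact Measurable.ite (hg (measurableSet_singleton (-π))) measurable_const hg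

private lemma J1_mean : (∫ x in (0:ℝ)..(2*π), J1fun x) = 0 := by
  have hπ := Real.pi_pos
  have h1 : (∫ x in (0:ℝ)..(2*π), J1fun x) = ∫ x in (-π)..π, J1fun x := by
    have h := J1_periodic.intervalIntegral_add_eq (-π) 0
    rw [zero_add] at h
    rw [← h, show -π + 2*π = π by ring]
  rw [h1]
  have h2 : (∫ x in (-π)..π, J1fun x) = ∫ x in (-π)..π, x := by
    apply intervalIntegral.integral_congr_ae
    have hne : ∀ᵐ (x:ℝ), x ≠ π := by
      rw [MeasureTheory.ae_iff]
      simpa using measure_singleton π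
    filter_upwards [hne] with x hxne hx
    rw [Set.uIoc_of_le (by linarith)] at hx
    exact J1_eq hx.1 (lt_of_le_of_ne hx.2 hxne)
  rw [h2, integral_id]
  ring

/-- **Key duality bound for higher primitives.**
If `φ` is a bounded measurable 2π-periodic function orthogonal to all
trigonometric polynomials of degree ≤ k−1, `Φ n` is the n-fold zero-mean
primitive of `φ`, and `J m` is the (m−1)-fold zero-mean primitive of the
sawtooth `J₁`, then for every trigonometric polynomial `p` of degree ≤ k−1,
`‖I^m φ‖_∞ ≤ ‖φ‖_∞ · ‖J_m − p‖_{L¹}`. -/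
theorem higher_primitive_bound
    (k m : ℕ) (hk : 1 ≤ k) (hm : 1 ≤ m)
    (J : ℕ → ℝ → ℝ)
    (hJ1 : J 1 = J1fun)
    (hJrec : ∀ n, 1 ≤ n → ∀ x : ℝ, J (n + 1) x = J (n + 1) 0 + ∫ t in (0:ℝ)..x, J n t)
    (hJmean : ∀ n, 1 ≤ n → (∫ x in (0:ℝ)..(2 * π), J (n + 1) x) = 0)
    (φ : ℝ → ℝ) (hmeas : Measurable φ) (hbdd : ∃ M, ∀ x, |φ x| ≤ M)
    (hper : Function.Periodic φ (2 * π))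
    (horth : ∀ j : ℕ, j < k →
      (∫ x in (0:ℝ)..(2 * π), φ x * Real.cos (j * x)) = 0 ∧
      (∫ x in (0:ℝ)..(2 * π), φ x * Real.sin (j * x)) = 0)
    (Φ : ℕ → ℝ → ℝ) (hΦ0 : Φ 0 = φ)
    (hΦrec : ∀ n, ∀ x : ℝ, Φ (n + 1) x = Φ (n + 1) 0 + ∫ t in (0:ℝ)..x, Φ n t)
    (hΦmean : ∀ n, (∫ x in (0:ℝ)..(2 * π), Φ (n + 1) x) = 0)
    (p : ℝ → ℝ) (hp : IsTrigPoly (k - 1) p) :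
    (⨆ x : ℝ, |Φ m x|) ≤
      (⨆ x : ℝ, |φ x|) * ((1 / (2 * π)) * ∫ x in (0:ℝ)..(2 * π), |J m x - p x|) := by
  have hπ := Real.pi_pos
  have h2π : (0:ℝ) < 2*π := by linarith
  have h2π' : (0:ℝ) ≤ 2*π := h2π.le
  obtain ⟨M, hM⟩ := hbdd
  have hM0 : 0 ≤ M := (abs_nonneg _).trans (hM 0)
  have hφint : ∀ a b, IntervalIntegrable φ volume a b := bddInt hmeas hM
  have hφmean : (∫ x in (0:ℝ)..(2*π), φ x) = 0 := by
    have h := (horth 0 hk).1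
    simpa using h
  -- package of properties of J n, n ≥ 1
  have hJgood : ∀ n, 1 ≤ n → Measurable (J n) ∧ Function.Periodic (J n) (2*π) ∧
      (∃ C, (0 ≤ C) ∧ ∀ x, |J n x| ≤ C) ∧ (∫ x in (0:ℝ)..(2*π), J n x) = 0 := by
    intro n hn
    induction n with
    | zero => omega
    | succ n ih =>
      by_cases hn0 : n = 0
      · subst hn0
        rw [hJ1]
        exact ⟨J1_measurable, J1_periodic, ⟨π, hπ.le, J1_bound⟩, J1_mean⟩
      · have hn1 : 1 ≤ n := by omega
        obtain ⟨hmeas', hper', ⟨C, hC0, hC⟩, hmean'⟩ := ih hn1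
        have hint : ∀ a b, IntervalIntegrable (J n) volume a b := fun a b => bddInt hmeas' hC a b
        have hcont : Continuous (J (n+1)) := by
          rw [funext (hJrec n hn1)]
          exact continuous_const.add (intervalIntegral.continuous_primitive hint 0)
        have hpernew : Function.Periodic (J (n+1)) (2*π) := by
          intro x
          rw [hJrec n hn1 (x + 2*π), hJrec n hn1 x]
          congr 1
          have hz : (∫ t in x..(x+2*π), J n t) = 0 := by
            have h := hper'.intervalIntegral_add_eq x 0
            rw [zero_add] at h
            rw [h, hmean']
          rw [← intervalIntegral.integral_add_adjacent_intervals (hint 0 x) (hint x (x+2*π)),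
            hz, add_zero]
        have hbddnew : ∃ C', (0 ≤ C') ∧ ∀ x, |J (n+1) x| ≤ C' := by
          refine ⟨|J (n+1) 0| + C * (2*π), by positivity, fun x => ?_⟩
          obtain ⟨y, hy, hxy⟩ := hpernew.exists_mem_Ico₀ h2π x
          rw [hxy, hJrec n hn1 y]
          refine (abs_add_le _ _).trans ?_
          have hb : ‖∫ t in (0:ℝ)..y, J n t‖ ≤ C * |y - 0| :=
            intervalIntegral.norm_integral_le_of_norm_le_const (fun t _ => by simpa using hC t)
          rw [Real.norm_eq_abs] at hb
          have hy2 : |y - 0| ≤ 2*π := by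
            rw [sub_zero, abs_of_nonneg hy.1]; exact hy.2.le
          nlinarith
        exact ⟨hcont.measurable, hpernew, hbddnew, hJmean n hn1⟩
  -- package of properties of Φ n
  have hΦgood : ∀ n, Measurable (Φ n) ∧ Function.Periodic (Φ n) (2*π) ∧
      (∃ C, (0 ≤ C) ∧ ∀ x, |Φ n x| ≤ C) ∧ (∫ x in (0:ℝ)..(2*π), Φ n x) = 0 := by
    intro n
    induction n with
    | zero => rw [hΦ0]; exact ⟨hmeas, hper, ⟨M, hM0, hM⟩, hφmean⟩
    | succ n ih =>
      obtain ⟨hmeas', hper', ⟨C, hC0, hC⟩, hmean'⟩ := ih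
      have hint : ∀ a b, IntervalIntegrable (Φ n) volume a b := fun a b => bddInt hmeas' hC a b
      have hcont : Continuous (Φ (n+1)) := by
        rw [funext (hΦrec n)]
        exact continuous_const.add (intervalIntegral.continuous_primitive hint 0)
      have hpernew : Function.Periodic (Φ (n+1)) (2*π) := by
        intro x
        rw [hΦrec n (x + 2*π), hΦrec n x]
        congr 1
        have hz : (∫ t in x..(x+2*π), Φ n t) = 0 := by
          have h := hper'.intervalIntegral_add_eq x 0
          rw [zero_add] at h
          rw [h, hmean']
        rw [← intervalIntegral.integral_add_adjacent_intervals (hint 0 x) (hint x (x+2*π)),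
          hz, add_zero]
      have hbddnew : ∃ C', (0 ≤ C') ∧ ∀ x, |Φ (n+1) x| ≤ C' := by
        refine ⟨|Φ (n+1) 0| + C * (2*π), by positivity, fun x => ?_⟩
        obtain ⟨y, hy, hxy⟩ := hpernew.exists_mem_Ico₀ h2π x
        rw [hxy, hΦrec n y]
        refine (abs_add_le _ _).trans ?_
        have hb : ‖∫ t in (0:ℝ)..y, Φ n t‖ ≤ C * |y - 0| :=
          intervalIntegral.norm_integral_le_of_norm_le_const (fun t _ => by simpa using hC t)
        rw [Real.norm_eq_abs] at hb
        have hy2 : |y - 0| ≤ 2*π := by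
          rw [sub_zero, abs_of_nonneg hy.1]; exact hy.2.le
        nlinarith
      exact ⟨hcont.measurable, hpernew, hbddnew, hΦmean n⟩
  -- integrability of convolution integrands
  have hconvint : ∀ n, 1 ≤ n → ∀ (c : ℝ) (a b : ℝ),
      IntervalIntegrable (fun t => J n (c - t) * φ t) volume a b := by
    intro n hn c a b
    obtain ⟨hmeasJ, _, ⟨C, hC0, hC⟩, _⟩ := hJgood n hn
    refine bddInt ((hmeasJ.comp (measurable_const.sub measurable_id)).mul hmeas)
      (M := C * M) (fun t => ?_) a b
    rw [Pi.mul_apply, abs_mul]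
    exact mul_le_mul (hC _) (hM t) (abs_nonneg _) hC0
  -- base increment identity
  have base_inc : ∀ x, (-(1/(2*π)) * ∫ t in (0:ℝ)..(2*π), J 1 (x + π - t) * φ t)
      - (-(1/(2*π)) * ∫ t in (0:ℝ)..(2*π), J 1 ((0:ℝ) + π - t) * φ t)
      = ∫ t in (0:ℝ)..x, φ t := by
    set D : ℝ → ℝ := fun x => ((-(1/(2*π)) * ∫ t in (0:ℝ)..(2*π), J 1 (x + π - t) * φ t)
      - (-(1/(2*π)) * ∫ t in (0:ℝ)..(2*π), J 1 ((0:ℝ) + π - t) * φ t))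
      - ∫ t in (0:ℝ)..x, φ t with hD
    suffices hDzero : ∀ x, D x = 0 by
      intro x
      have h := hDzero x
      rw [hD] at h
      simp only [] at h
      linarith
    have hDper : Function.Periodic D (2*π) := by
      intro x
      rw [hD]
      simp only []
      have e1 : (∫ t in (0:ℝ)..(2*π), J 1 (x + 2*π + π - t) * φ t)
          = ∫ t in (0:ℝ)..(2*π), J 1 (x + π - t) * φ t := by
        apply intervalIntegral.integral_congr
        intro t _
        show J 1 (x + 2*π + π - t) * φ t = J 1 (x + π - t) * φ t
        have e2 : x + 2*π + π - t = (x + π - t) + 2*π := by ring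
        rw [e2, hJ1, J1_periodic (x + π - t)]
      have e3 : (∫ t in (0:ℝ)..(x + 2*π), φ t) = ∫ t in (0:ℝ)..x, φ t := by
        have hz : (∫ t in x..(x+2*π), φ t) = 0 := by
          have h := hper.intervalIntegral_add_eq x 0
          rw [zero_add] at h
          rw [h, hφmean]
        rw [← intervalIntegral.integral_add_adjacent_intervals (hφint 0 x) (hφint x (x+2*π)),
          hz, add_zero]
      rw [e1, e3]
    intro x
    obtain ⟨y, hy, hxy⟩ := hDper.exists_mem_Ico₀ h2π x
    rw [hxy]
    -- now y ∈ [0, 2π)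
    rw [hD]
    simp only []
    have hdiff : (∫ t in (0:ℝ)..(2*π), J 1 (y + π - t) * φ t)
        - (∫ t in (0:ℝ)..(2*π), J 1 ((0:ℝ) + π - t) * φ t)
        = -(2*π) * ∫ t in (0:ℝ)..y, φ t := by
      rw [← intervalIntegral.integral_sub (hconvint 1 le_rfl (y+π) 0 (2*π))
        (hconvint 1 le_rfl ((0:ℝ)+π) 0 (2*π))]
      have hcong : (∫ t in (0:ℝ)..(2*π), (J 1 (y + π - t) * φ t - J 1 ((0:ℝ) + π - t) * φ t))
          = ∫ t in (0:ℝ)..(2*π), (y * φ t - 2*π * Set.indicator (Set.Iio y) φ t) := by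
        apply intervalIntegral.integral_congr_ae
        have hne1 : ∀ᵐ (t:ℝ), t ≠ y := by
          rw [MeasureTheory.ae_iff]; simpa using measure_singleton y
        have hne2 : ∀ᵐ (t:ℝ), t ≠ 2*π := by
          rw [MeasureTheory.ae_iff]; simpa using measure_singleton (2*π)
        filter_upwards [hne1, hne2] with t hty ht2 htmem
        rw [Set.uIoc_of_le h2π'] at htmem
        obtain ⟨ht1, ht2'⟩ := htmem
        have ht2'' : t < 2*π := lt_of_le_of_ne ht2' ht2
        have hJ0 : J 1 ((0:ℝ) + π - t) = π - t := by
          rw [zero_add, hJ1]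
          exact J1_eq (by linarith) (by linarith)
        rcases lt_or_gt_of_ne hty with hlt | hgt
        · have hind : Set.indicator (Set.Iio y) φ t = φ t := Set.indicator_of_mem (Set.mem_Iio.mpr hlt) _
          have hJy : J 1 (y + π - t) = y + π - t - 2*π := by
            rw [hJ1]
            exact J1_eq' (by linarith) (by linarith [hy.2])
          rw [hJy, hJ0, hind]; ring
        · have hind : Set.indicator (Set.Iio y) φ t = 0 :=
            Set.indicator_of_notMem (fun hmem => absurd (Set.mem_Iio.mp hmem) (not_lt.mpr hgt.le)) _
          have hJy : J 1 (y + π - t) = y + π - t := by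
            rw [hJ1]
            exact J1_eq (by linarith [hy.1]) (by linarith)
          rw [hJy, hJ0, hind]; ring
      rw [hcong]
      have hindint : IntervalIntegrable (fun t => Set.indicator (Set.Iio y) φ t) volume 0 (2*π) := by
        refine bddInt (hmeas.indicator measurableSet_Iio) (M := M) (fun t => ?_) 0 (2*π)
        rw [Set.indicator]
        split
        · exact hM t
        · simpa using hM0
      rw [intervalIntegral.integral_sub ((hφint 0 (2*π)).const_mul y) (hindint.const_mul (2*π)),
        intervalIntegral.integral_const_mul, intervalIntegral.integral_const_mul, hφmean, mul_zero]
      have hindeval : (∫ t in (0:ℝ)..(2*π), Set.indicator (Set.Iio y) φ t)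
          = ∫ t in (0:ℝ)..y, φ t := by
        rw [intervalIntegral.integral_of_le h2π', intervalIntegral.integral_of_le hy.1,
          MeasureTheory.setIntegral_indicator measurableSet_Iio]
        have hseteq : Set.Ioc 0 (2*π) ∩ Set.Iio y = Set.Ioo 0 y := by
          ext t
          constructor
          · rintro ⟨⟨ha1, _⟩, ha3⟩; exact ⟨ha1, ha3⟩
          · rintro ⟨hb1, hb2⟩; exact ⟨⟨hb1, le_trans hb2.le hy.2.le⟩, hb2⟩
        rw [hseteq, ← MeasureTheory.integral_Ioc_eq_integral_Ioo]
      rw [hindeval]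
      ring
    rw [← mul_sub, hdiff]
    have hne : (2*π : ℝ) ≠ 0 := by positivity
    field_simp
    ring
  -- step increment identity
  have step_inc : ∀ n, 1 ≤ n → ∀ x,
      (-(1/(2*π)) * ∫ t in (0:ℝ)..(2*π), J (n+1) (x + π - t) * φ t)
      - (-(1/(2*π)) * ∫ t in (0:ℝ)..(2*π), J (n+1) ((0:ℝ) + π - t) * φ t)
      = ∫ y in (0:ℝ)..x, (-(1/(2*π)) * ∫ t in (0:ℝ)..(2*π), J n (y + π - t) * φ t) := by
    intro n hn x
    obtain ⟨hmeasJ, hperJ, ⟨C, hC0, hC⟩, hmeanJ⟩ := hJgood n hn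
    have hintJ : ∀ a b, IntervalIntegrable (J n) volume a b := fun a b => bddInt hmeasJ hC a b
    have hf : Measurable (Function.uncurry fun y t => J n (y + π - t) * φ t) :=
      (hmeasJ.comp ((measurable_fst.add_const π).sub measurable_snd)).mul
        (hmeas.comp measurable_snd)
    have hb : ∀ y t, |J n (y + π - t) * φ t| ≤ C * M := fun y t => by
      rw [abs_mul]
      exact mul_le_mul (hC _) (hM t) (abs_nonneg _) hC0
    rw [← mul_sub, ← intervalIntegral.integral_sub (hconvint (n+1) (by omega) (x+π) 0 (2*π))
      (hconvint (n+1) (by omega) ((0:ℝ)+π) 0 (2*π))]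
    have hcong : (∫ t in (0:ℝ)..(2*π), (J (n+1) (x + π - t) * φ t - J (n+1) ((0:ℝ) + π - t) * φ t))
        = ∫ t in (0:ℝ)..(2*π), (∫ y in (0:ℝ)..x, J n (y + π - t) * φ t) := by
      apply intervalIntegral.integral_congr
      intro t _
      show J (n+1) (x + π - t) * φ t - J (n+1) ((0:ℝ) + π - t) * φ t
        = ∫ y in (0:ℝ)..x, J n (y + π - t) * φ t
      have h1 : J (n+1) (x + π - t) * φ t - J (n+1) ((0:ℝ) + π - t) * φ t
          = (J (n+1) (x + π - t) - J (n+1) ((0:ℝ) + π - t)) * φ t := by ring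
      rw [h1]
      have h2 : J (n+1) (x + π - t) - J (n+1) ((0:ℝ) + π - t)
          = ∫ y in (0:ℝ)..x, J n (y + π - t) := by
        rw [hJrec n hn (x + π - t), hJrec n hn ((0:ℝ) + π - t)]
        have h3 := intervalIntegral.integral_interval_sub_left
          (hintJ 0 (x + π - t)) (hintJ 0 ((0:ℝ) + π - t))
        rw [show (J (n+1) 0 + ∫ u in (0:ℝ)..(x + π - t), J n u)
            - (J (n+1) 0 + ∫ u in (0:ℝ)..((0:ℝ) + π - t), J n u)
            = (∫ u in (0:ℝ)..(x + π - t), J n u)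
              - ∫ u in (0:ℝ)..((0:ℝ) + π - t), J n u by ring, h3]
        have h4 : (∫ y in (0:ℝ)..x, J n (y + π - t))
            = ∫ y in (0:ℝ)..x, J n (y + (π - t)) := by
          apply intervalIntegral.integral_congr
          intro y _
          show J n (y + π - t) = J n (y + (π - t))
          congr 1; ring
        rw [h4, intervalIntegral.integral_comp_add_right (fun u => J n u) (π - t)]
        congr 1 <;> ring
      rw [h2, intervalIntegral.integral_mul_const]
    rw [hcong, ← fubini_swap hf hb 0 x h2π', ← intervalIntegral.integral_const_mul]
  -- the key convolution identity
  have key : ∀ n, 1 ≤ n → ∀ x, Φ n x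
      = -(1/(2*π)) * ∫ t in (0:ℝ)..(2*π), J n (x + π - t) * φ t := by
    intro n hn
    induction n with
    | zero => omega
    | succ n ih =>
      obtain ⟨hmeasJ, hperJ, ⟨C, hC0, hC⟩, hmeanJ⟩ := hJgood (n+1) hn
      obtain ⟨hmeasΦ, hperΦ, ⟨CΦ, hCΦ0, hCΦ⟩, hmeanΦ⟩ := hΦgood (n+1)
      refine eq_of_increment_mean (F := Φ (n+1))
        (G := fun x => -(1/(2*π)) * ∫ t in (0:ℝ)..(2*π), J (n+1) (x + π - t) * φ t)
        ?_ hmeanΦ ?_ (bddInt hmeasΦ hCΦ 0 (2*π))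
      · intro x
        show Φ (n+1) x - Φ (n+1) 0
          = (-(1/(2*π)) * ∫ t in (0:ℝ)..(2*π), J (n+1) (x + π - t) * φ t)
          - (-(1/(2*π)) * ∫ t in (0:ℝ)..(2*π), J (n+1) ((0:ℝ) + π - t) * φ t)
        rw [hΦrec n x, show Φ (n+1) 0 + (∫ t in (0:ℝ)..x, Φ n t) - Φ (n+1) 0
          = ∫ t in (0:ℝ)..x, Φ n t by ring]
        rcases Nat.eq_zero_or_pos n with rfl | hn1
        · rw [show (∫ t in (0:ℝ)..x, Φ 0 t) = ∫ t in (0:ℝ)..x, φ t from by rw [hΦ0]]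
          exact (base_inc x).symm
        · rw [intervalIntegral.integral_congr (fun y _ => ih hn1 y)]
          exact (step_inc n hn1 x).symm
      · show (∫ x in (0:ℝ)..(2*π),
          -(1/(2*π)) * ∫ t in (0:ℝ)..(2*π), J (n+1) (x + π - t) * φ t) = 0
        rw [intervalIntegral.integral_const_mul,
          conv_mean_zero hmeasJ hC hperJ hmeanJ hmeas hM, mul_zero]
  -- properties of the trigonometric polynomial p
  obtain ⟨a, b, hab⟩ := hp
  have hk' : k - 1 + 1 = k := Nat.succ_pred_eq_of_pos hk
  have hpcont : Continuous p := by
    rw [funext hab]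
    apply continuous_finset_sum
    intro j _
    fun_prop
  have hppere : Function.Periodic p (2*π) := by
    intro x
    rw [hab (x + 2*π), hab x]
    apply Finset.sum_congr rfl
    intro j _
    have hc : (j:ℝ) * (x + 2*π) = j*x + (j:ℤ) * (2*π) := by push_cast; ring
    rw [hc, Real.cos_add_int_mul_two_pi, Real.sin_add_int_mul_two_pi]
  have hpbound : ∀ x, |p x| ≤ ∑ j ∈ Finset.range (k-1+1), (|a j| + |b j|) := by
    intro x
    rw [hab x]
    refine (Finset.abs_sum_le_sum_abs _ _).trans (Finset.sum_le_sum fun j _ => ?_)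
    refine (abs_add_le _ _).trans (add_le_add ?_ ?_)
    · rw [abs_mul]
      exact mul_le_of_le_one_right (abs_nonneg _) (Real.abs_cos_le_one _)
    · rw [abs_mul]
      exact mul_le_of_le_one_right (abs_nonneg _) (Real.abs_sin_le_one _)
  -- orthogonality of φ to shifted trig polynomials
  have horthp : ∀ c : ℝ, (∫ t in (0:ℝ)..(2*π), p (c - t) * φ t) = 0 := by
    intro c
    have hterm : ∀ j : ℕ, IntervalIntegrable (fun t => φ t * Real.cos (j*t)) volume 0 (2*π) ∧
        IntervalIntegrable (fun t => φ t * Real.sin (j*t)) volume 0 (2*π) := by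
      intro j
      constructor
      · refine bddInt (hmeas.mul (by fun_prop)) (M := M) (fun t => ?_) 0 (2*π)
        rw [Pi.mul_apply, abs_mul]
        calc |φ t| * |Real.cos (j*t)| ≤ M * 1 :=
              mul_le_mul (hM t) (Real.abs_cos_le_one _) (abs_nonneg _) hM0
          _ = M := mul_one M
      · refine bddInt (hmeas.mul (by fun_prop)) (M := M) (fun t => ?_) 0 (2*π)
        rw [Pi.mul_apply, abs_mul]
        calc |φ t| * |Real.sin (j*t)| ≤ M * 1 :=
              mul_le_mul (hM t) (Real.abs_sin_le_one _) (abs_nonneg _) hM0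
          _ = M := mul_one M
    have hrepr : ∀ t, p (c - t) * φ t = ∑ j ∈ Finset.range k,
        ((a j * Real.cos (j*c) + b j * Real.sin (j*c)) * (φ t * Real.cos (j*t)) +
         (a j * Real.sin (j*c) - b j * Real.cos (j*c)) * (φ t * Real.sin (j*t))) := by
      intro t
      rw [hab (c - t), hk', Finset.sum_mul]
      refine Finset.sum_congr rfl fun j _ => ?_
      have h1 : (j:ℝ) * (c - t) = j*c - j*t := by ring
      rw [h1, Real.cos_sub, Real.sin_sub]
      ring
    rw [intervalIntegral.integral_congr (fun t _ => hrepr t),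
      intervalIntegral.integral_finset_sum
        (fun j _ => (((hterm j).1.const_mul _).add ((hterm j).2.const_mul _)))]
    refine Finset.sum_eq_zero fun j hj => ?_
    have hj' : j < k := Finset.mem_range.mp hj
    rw [intervalIntegral.integral_add ((hterm j).1.const_mul _) ((hterm j).2.const_mul _),
      intervalIntegral.integral_const_mul, intervalIntegral.integral_const_mul,
      (horth j hj').1, (horth j hj').2, mul_zero, mul_zero, add_zero]
  -- final bound
  obtain ⟨hmeasJm, hperJm, ⟨C, hC0, hC⟩, hmeanJm⟩ := hJgood m hm
  have hbS : BddAbove (Set.range fun x => |φ x|) := ⟨M, by rintro v ⟨x, rfl⟩; exact hM x⟩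
  have hφS : ∀ t, |φ t| ≤ ⨆ x : ℝ, |φ x| := fun t => le_ciSup hbS t
  have hS0 : (0:ℝ) ≤ ⨆ x : ℝ, |φ x| := (abs_nonneg _).trans (hφS 0)
  set Cp := ∑ j ∈ Finset.range (k-1+1), (|a j| + |b j|) with hCp
  have hCp0 : 0 ≤ Cp := (abs_nonneg _).trans (hpbound 0)
  set q : ℝ → ℝ := fun u => J m u - p u with hq
  have hqmeas : Measurable q := hmeasJm.sub hpcont.measurable
  have hqb : ∀ u, |q u| ≤ C + Cp := fun u =>
    (abs_sub _ _).trans (add_le_add (hC u) (hpbound u))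
  have hqper : Function.Periodic (fun u => |q u|) (2*π) := by
    intro u
    simp only [hq]
    rw [hperJm u, hppere u]
  refine ciSup_le fun x => ?_
  rw [key m hm x]
  have hint1 : IntervalIntegrable (fun t => q (x + π - t) * φ t) volume 0 (2*π) := by
    refine bddInt ((hqmeas.comp (measurable_const.sub measurable_id)).mul hmeas)
      (M := (C + Cp) * M) (fun t => ?_) 0 (2*π)
    rw [Pi.mul_apply, abs_mul]
    exact mul_le_mul (hqb _) (hM t) (abs_nonneg _) (by linarith)
  have hint2 : IntervalIntegrable (fun t => p (x + π - t) * φ t) volume 0 (2*π) := by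
    refine bddInt ((hpcont.measurable.comp (measurable_const.sub measurable_id)).mul hmeas)
      (M := Cp * M) (fun t => ?_) 0 (2*π)
    rw [Pi.mul_apply, abs_mul]
    exact mul_le_mul (hpbound _) (hM t) (abs_nonneg _) hCp0
  have hsplit : (∫ t in (0:ℝ)..(2*π), J m (x + π - t) * φ t)
      = ∫ t in (0:ℝ)..(2*π), q (x + π - t) * φ t := by
    have e1 : (∫ t in (0:ℝ)..(2*π), J m (x + π - t) * φ t)
        = ∫ t in (0:ℝ)..(2*π), (q (x + π - t) * φ t + p (x + π - t) * φ t) := by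
      apply intervalIntegral.integral_congr
      intro t _
      show J m (x + π - t) * φ t = q (x + π - t) * φ t + p (x + π - t) * φ t
      simp only [hq]
      ring
    rw [e1, intervalIntegral.integral_add hint1 hint2, horthp (x + π), add_zero]
  rw [hsplit, abs_mul, abs_neg, abs_of_pos (show (0:ℝ) < 1/(2*π) by positivity)]
  have h2 : |∫ t in (0:ℝ)..(2*π), q (x + π - t) * φ t|
      ≤ ∫ t in (0:ℝ)..(2*π), |q (x + π - t)| * (⨆ x : ℝ, |φ x|) := by
    refine (intervalIntegral.abs_integral_le_integral_abs h2π').trans ?_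
    refine intervalIntegral.integral_mono_on h2π' hint1.abs
      ((bddInt ((hqmeas.comp (measurable_const.sub measurable_id)).abs)
        (M := C + Cp) (fun t => by
          rw [abs_abs]
          exact hqb _) 0 (2*π)).mul_const _) (fun t _ => ?_)
    rw [abs_mul]
    exact mul_le_mul_of_nonneg_left (hφS t) (abs_nonneg _)
  have h3 : (∫ t in (0:ℝ)..(2*π), |q (x + π - t)| * (⨆ x : ℝ, |φ x|))
      = (∫ u in (0:ℝ)..(2*π), |q u|) * (⨆ x : ℝ, |φ x|) := by
    rw [intervalIntegral.integral_mul_const]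
    congr 1
    exact reflect_integral hqper (x + π)
  have h4 : (0:ℝ) < 1/(2*π) := by positivity
  calc 1/(2*π) * |∫ t in (0:ℝ)..(2*π), q (x + π - t) * φ t|
      ≤ 1/(2*π) * ((∫ u in (0:ℝ)..(2*π), |q u|) * (⨆ x : ℝ, |φ x|)) := by
        rw [← h3]
        exact mul_le_mul_of_nonneg_left h2 h4.le
    _ = (⨆ x : ℝ, |φ x|) * (1/(2*π) * ∫ u in (0:ℝ)..(2*π), |q u|) := by ring
    _ = (⨆ x : ℝ, |φ x|) * (1/(2*π) * ∫ u in (0:ℝ)..(2*π), |J m u - p u|) := rfl
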